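/- Let K be a field of characteristic 0, σ a pointed full-dimensional rational polyhedral cone in N_ℚ, and A = K[σ^∨ ∩ M] the affine semigroup algebra. For every extremal ray ρ of σ with primitive generator ν and every e ∈ S_ρ, the K-linear map ∂ determined on monomials by ∂(χ^m) = ⟨m, ν⟩ χ^{m+e} is a well-defined derivation of A that is locally nilpotent, and its kernel is the semigroup subalgebra K[τ ∩ M], where τ = σ^∨ ∩ ρ^⊥. -/

import Mathlib

open scoped BigOperators Pointwise

noncomputable section

/-- Rational `n`-space `N_ℚ ≅ M_ℚ ≅ ℚⁿ`. -/
abbrev Vec (n : ℕ) := Fin n → ℚ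

/-- The natural pairing `M_ℚ × N_ℚ → ℚ`. -/
def pairQ {n : ℕ} (m p : Vec n) : ℚ := ∑ i, m i * p i

/-- The dual cone of a subset of `N_ℚ`. -/
def dualCone {n : ℕ} (σ : Set (Vec n)) : Set (Vec n) :=
  {m | ∀ p ∈ σ, 0 ≤ pairQ m p}

/-- Inclusion of the lattice `M = ℤⁿ` into `M_ℚ`. -/
def toQ {n : ℕ} (v : Fin n → ℤ) : Vec n := fun i => (v i : ℚ)

/-- A vector of `ℚⁿ` is a lattice vector if all its coordinates are integers. -/
def IsLatticeVec {n : ℕ} (v : Vec n) : Prop := ∀ i, ∃ z : ℤ, v i = (z : ℚ)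

/-- The convex cone generated by a set: all finite nonnegative rational combinations. -/
def coneHull {n : ℕ} (S : Set (Vec n)) : Set (Vec n) :=
  {x | ∃ (G : Finset (Vec n)) (c : Vec n → ℚ), ↑G ⊆ S ∧ (∀ g, 0 ≤ c g) ∧
    x = ∑ g ∈ G, c g • g}

/-- A rational polyhedral cone: the cone generated by finitely many lattice vectors. -/
def IsRatPolyCone {n : ℕ} (σ : Set (Vec n)) : Prop :=
  ∃ G : Finset (Vec n), (∀ g ∈ G, IsLatticeVec g) ∧ σ = coneHull ↑G

/-- A cone is pointed if it contains no line through the origin. -/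
def PointedCone' {n : ℕ} (σ : Set (Vec n)) : Prop := σ ∩ (-σ) ⊆ {0}

/-- A cone is of full dimension if it spans the ambient space. -/
def FullDim {n : ℕ} (σ : Set (Vec n)) : Prop := Submodule.span ℚ σ = ⊤

/-- `ρ` is the extremal ray of `σ` generated by the primitive lattice vector `ν`. -/
def IsExtremalRay {n : ℕ} (σ ρ : Set (Vec n)) (ν : Vec n) : Prop :=
  IsLatticeVec ν ∧ ν ≠ 0 ∧ (∀ c : ℚ, 0 < c → IsLatticeVec (c • ν) → 1 ≤ c) ∧
  ρ = {x | ∃ c : ℚ, 0 ≤ c ∧ x = c • ν} ∧ ρ ⊆ σ ∧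
  (∀ x ∈ σ, ∀ y ∈ σ, x + y ∈ ρ → x ∈ ρ)

/-- The submonoid `σ^∨ ∩ M` of lattice points of the dual cone. -/
def latticeCone {n : ℕ} (σ : Set (Vec n)) : AddSubmonoid (Fin n → ℤ) where
  carrier := {m | toQ m ∈ dualCone σ}
  zero_mem' := by
    intro p hp
    simp [pairQ, toQ]
  add_mem' := by
    intro a b ha hb p hp
    have h : pairQ (toQ (a + b)) p = pairQ (toQ a) p + pairQ (toQ b) p := by
      simp [pairQ, toQ, add_mul, Finset.sum_add_distrib]
    rw [h]
    exact add_nonneg (ha p hp) (hb p hp)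

/-- A derivation is locally nilpotent if every element is annihilated by some iterate. -/
def IsLND {R A : Type*} [CommRing R] [CommRing A] [Algebra R A]
    (D : Derivation R A A) : Prop :=
  ∀ a : A, ∃ k : ℕ, (⇑D)^[k] a = 0


section Stmt7Aux

variable {n : ℕ} (K : Type*) [Field K] [CharZero K]
variable (σ : Set (Vec n)) (ν : Vec n) (e : Fin n → ℤ)

lemma toQ_add' (a b : Fin n → ℤ) : toQ (a + b) = toQ a + toQ b := by
  funext i; simp [toQ]

lemma pairQ_add_left' (a b p : Vec n) : pairQ (a + b) p = pairQ a p + pairQ b p := by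
  simp [pairQ, add_mul, Finset.sum_add_distrib]

lemma pairQ_toQ_add (a b : Fin n → ℤ) (p : Vec n) :
    pairQ (toQ (a + b)) p = pairQ (toQ a) p + pairQ (toQ b) p := by
  rw [toQ_add', pairQ_add_left']

lemma pairQ_toQ_nsmul (k : ℕ) (v : Fin n → ℤ) (p : Vec n) :
    pairQ (toQ (k • v)) p = k * pairQ (toQ v) p := by
  simp only [pairQ, toQ, Pi.smul_apply, nsmul_eq_mul, Finset.mul_sum]
  refine Finset.sum_congr rfl fun i _ => ?_
  push_cast
  ring

/-- The pairing of a lattice point of `σ^∨` with `ν`. -/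
abbrev pv (m : latticeCone σ) : ℚ := pairQ (toQ (m : Fin n → ℤ)) ν

lemma pv_add (m m' : latticeCone σ) : pv σ ν (m + m') = pv σ ν m + pv σ ν m' := by
  show pairQ (toQ ((m : Fin n → ℤ) + (m' : Fin n → ℤ))) ν = _
  rw [pairQ_toQ_add]

lemma pv_zero : pv σ ν 0 = 0 := by
  simp [pv, pairQ, toQ]

lemma pv_nonneg (hν : ν ∈ σ) (m : latticeCone σ) : 0 ≤ pv σ ν m := m.2 ν hν

lemma int_pair (hl : IsLatticeVec ν) (v : Fin n → ℤ) :
    ∃ z : ℤ, pairQ (toQ v) ν = (z : ℚ) := by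
  choose z hz using hl
  refine ⟨∑ i, v i * z i, ?_⟩
  simp only [pairQ, toQ, hz]
  push_cast
  ring

variable (he₂ : ∀ m : Fin n → ℤ, toQ m ∈ dualCone σ → pairQ (toQ m) ν ≠ 0 →
  toQ (m + e) ∈ dualCone σ)

/-- The shift `m ↦ m + e` (defined to be `m` when `⟨m,ν⟩ = 0`, where it is irrelevant). -/
def sh (m : latticeCone σ) : latticeCone σ :=
  if h : pv σ ν m = 0 then m else ⟨(m : Fin n → ℤ) + e, he₂ _ m.2 h⟩

lemma sh_coe (m : latticeCone σ) (h : pv σ ν m ≠ 0) :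
    (sh σ ν e he₂ m : Fin n → ℤ) = (m : Fin n → ℤ) + e := by
  simp [sh, h]

lemma pv_sh (m : latticeCone σ) (h : pv σ ν m ≠ 0) :
    pv σ ν (sh σ ν e he₂ m) = pv σ ν m + pairQ (toQ e) ν := by
  show pairQ (toQ (sh σ ν e he₂ m : Fin n → ℤ)) ν = _
  rw [sh_coe σ ν e he₂ m h, pairQ_toQ_add]

/-- The underlying linear map of the derivation. -/
def Lmap : AddMonoidAlgebra K ↥(latticeCone σ) →ₗ[K] AddMonoidAlgebra K ↥(latticeCone σ) :=
  (Finsupp.lsum K fun m => algebraMap ℚ K (pv σ ν m) • AddMonoidAlgebra.lsingle (sh σ ν e he₂ m))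
    ∘ₗ (AddMonoidAlgebra.coeffLinearEquiv K).toLinearMap

lemma Lmap_single (m : latticeCone σ) (c : K) :
    Lmap K σ ν e he₂ (AddMonoidAlgebra.single m c) =
      algebraMap ℚ K (pv σ ν m) • AddMonoidAlgebra.single (sh σ ν e he₂ m) c := by
  show Finsupp.lsum K _ (Finsupp.single m c) = _
  rw [Finsupp.lsum_single]
  rfl

/-- The derivation `∂(χ^m) = ⟨m,ν⟩ χ^{m+e}`. -/
def Der (hν : ν ∈ σ) :
    Derivation K (AddMonoidAlgebra K ↥(latticeCone σ)) (AddMonoidAlgebra K ↥(latticeCone σ)) where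
  toLinearMap := Lmap K σ ν e he₂
  map_one_eq_zero' := by
    show Lmap K σ ν e he₂ (AddMonoidAlgebra.single 0 1) = 0
    rw [Lmap_single, pv_zero]
    simp
  leibniz' := by
    intro a b
    show Lmap K σ ν e he₂ (a * b) =
      a • Lmap K σ ν e he₂ b + b • Lmap K σ ν e he₂ a
    induction a using AddMonoidAlgebra.induction_linear with
    | zero => simp
    | add f g hf hg =>
        rw [add_mul, map_add, hf, hg, map_add, add_smul, smul_add]
        abel
    | single m c =>
      induction b using AddMonoidAlgebra.induction_linear with
      | zero => simp
      | add f g hf hg =>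
          rw [mul_add, map_add, hf, hg, map_add, smul_add, add_smul]
          abel
      | single m' c' =>
        have key : ∀ (a : latticeCone σ) (cc : K) (x : AddMonoidAlgebra K ↥(latticeCone σ))
            (s : K), AddMonoidAlgebra.single a cc • (s • x)
              = s • (AddMonoidAlgebra.single a cc • x) := fun a cc x s => smul_comm _ _ _
        rw [show ((AddMonoidAlgebra.single m c : AddMonoidAlgebra K ↥(latticeCone σ))
              * AddMonoidAlgebra.single m' c') = AddMonoidAlgebra.single (m + m') (c * c')
            from AddMonoidAlgebra.single_mul_single ..,
          Lmap_single, Lmap_single, Lmap_single, key, key,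
          smul_eq_mul, smul_eq_mul, AddMonoidAlgebra.single_mul_single,
          AddMonoidAlgebra.single_mul_single]
        rcases eq_or_ne (pv σ ν m) 0 with h1 | h1 <;>
          rcases eq_or_ne (pv σ ν m') 0 with h2 | h2
        · have h12 : pv σ ν (m + m') = 0 := by rw [pv_add, h1, h2, add_zero]
          simp [h1, h2, h12]
        · have h12 : pv σ ν (m + m') ≠ 0 := by rw [pv_add, h1, zero_add]; exact h2
          have hsh : sh σ ν e he₂ (m + m') = m + sh σ ν e he₂ m' := by
            apply Subtype.ext
            push_cast [sh_coe σ ν e he₂ _ h12, sh_coe σ ν e he₂ _ h2]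
            ring
          rw [hsh, pv_add, h1, zero_add]
          simp [h1, mul_comm]
        · have h12 : pv σ ν (m + m') ≠ 0 := by rw [pv_add, h2, add_zero]; exact h1
          have hsh : sh σ ν e he₂ (m + m') = m' + sh σ ν e he₂ m := by
            apply Subtype.ext
            push_cast [sh_coe σ ν e he₂ _ h12, sh_coe σ ν e he₂ _ h1]
            ring
          rw [hsh, pv_add, h2, add_zero]
          simp [h2, mul_comm]
        · have h12 : pv σ ν (m + m') ≠ 0 := by
            rw [pv_add]
            have := pv_nonneg σ ν hν m
            have := pv_nonneg σ ν hν m'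
            intro h
            rcases lt_or_eq_of_le (pv_nonneg σ ν hν m) with h' | h'
            · nlinarith [pv_nonneg σ ν hν m']
            · exact h1 h'.symm
          have hshA : m + sh σ ν e he₂ m' = sh σ ν e he₂ (m + m') := by
            apply Subtype.ext
            push_cast [sh_coe σ ν e he₂ _ h12, sh_coe σ ν e he₂ _ h2]
            ring
          have hshB : m' + sh σ ν e he₂ m = sh σ ν e he₂ (m + m') := by
            apply Subtype.ext
            push_cast [sh_coe σ ν e he₂ _ h12, sh_coe σ ν e he₂ _ h1]
            ring
          rw [hshA, hshB, pv_add, map_add, add_smul, mul_comm c' c, add_comm]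

lemma Der_apply (hν : ν ∈ σ) (x : AddMonoidAlgebra K ↥(latticeCone σ)) :
    Der K σ ν e he₂ hν x = Lmap K σ ν e he₂ x := rfl

end Stmt7Aux

open AddMonoidAlgebra in
/-- Lemma 2.8 (toric-LND): given an extremal ray `ρ` of a pointed full-dimensional
rational polyhedral cone `σ` with primitive generator `ν`, and `e ∈ S_ρ`, there is a
(unique) derivation `∂` of the affine semigroup algebra `A = K[σ^∨ ∩ M]` with
`∂(χ^m) = ⟨m, ν⟩ χ^{m+e}`; it is locally nilpotent with kernel `K[τ ∩ M]`,
`τ = σ^∨ ∩ ρ^⊥`. -/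
theorem stmt7 {n : ℕ} (K : Type*) [Field K] [CharZero K]
    (σ ρ : Set (Vec n)) (ν : Vec n)
    (hσ : IsRatPolyCone σ) (hpt : PointedCone' σ) (hfull : FullDim σ)
    (hρ : IsExtremalRay σ ρ ν)
    (e : Fin n → ℤ)
    (he₁ : toQ e ∉ dualCone σ)
    (he₂ : ∀ m : Fin n → ℤ, toQ m ∈ dualCone σ → pairQ (toQ m) ν ≠ 0 →
      toQ (m + e) ∈ dualCone σ) :
    ∃ D : Derivation K (AddMonoidAlgebra K ↥(latticeCone σ))
        (AddMonoidAlgebra K ↥(latticeCone σ)),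
      (∀ (m m' : latticeCone σ), (m' : Fin n → ℤ) = (m : Fin n → ℤ) + e →
        D (single m (1 : K)) = algebraMap ℚ K (pairQ (toQ m) ν) • single m' (1 : K)) ∧
      (∀ m : latticeCone σ, pairQ (toQ m) ν = 0 → D (single m (1 : K)) = 0) ∧
      IsLND D ∧
      (∀ x, D x = 0 ↔ x ∈ Submodule.span K
        {y : AddMonoidAlgebra K ↥(latticeCone σ) |
          ∃ m : latticeCone σ, pairQ (toQ m) ν = 0 ∧ y = single m (1 : K)}) := by
  have hν : ν ∈ σ := by
    obtain ⟨hl, hne, hprim, hρeq, hρσ, hext⟩ := hρ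
    apply hρσ
    rw [hρeq]
    exact ⟨1, by norm_num, (one_smul ℚ ν).symm⟩
  have hl : IsLatticeVec ν := hρ.1
  set L := Lmap K σ ν e he₂ with hL
  have hDL : ∀ x, Der K σ ν e he₂ hν x = L x := fun _ => rfl
  refine ⟨Der K σ ν e he₂ hν, ?_, ?_, ?_, ?_⟩
  · -- value on monomials with nonzero pairing
    intro m m' hm'
    rw [hDL, Lmap_single]
    simp only [pv]
    rcases eq_or_ne (pairQ (toQ (m : Fin n → ℤ)) ν) 0 with h | h
    · rw [h, map_zero, zero_smul, zero_smul]
    · have hsh : sh σ ν e he₂ m = m' := Subtype.ext (by rw [sh_coe σ ν e he₂ m h, hm'])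
      rw [hsh]
  · -- vanishing on monomials with zero pairing
    intro m h
    rw [hDL, Lmap_single]
    simp only [pv]
    rw [h, map_zero, zero_smul]
  · -- local nilpotency
    have hzero : ∀ k : ℕ, (⇑L)^[k] (0 : AddMonoidAlgebra K ↥(latticeCone σ)) = 0 :=
      fun k => Function.iterate_fixed (map_zero L) k
    have hstep : ∀ m : latticeCone σ, pv σ ν m ≠ 0 →
        pv σ ν (sh σ ν e he₂ m) ≤ pv σ ν m - 1 := by
      by_cases hall : ∀ m : latticeCone σ, pv σ ν m = 0
      · intro m hm; exact absurd (hall m) hm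
      · push_neg at hall
        obtain ⟨m₀, hm₀⟩ := hall
        have hm₀pos : 0 < pv σ ν m₀ := (pv_nonneg σ ν hν m₀).lt_of_ne (Ne.symm hm₀)
        have hpe : pairQ (toQ e) ν < 0 := by
          by_contra hge
          push_neg at hge
          apply he₁
          have claim : ∀ k : ℕ, toQ ((m₀ : Fin n → ℤ) + k • e) ∈ dualCone σ ∧
              0 < pairQ (toQ ((m₀ : Fin n → ℤ) + k • e)) ν := by
            intro k
            induction k with
            | zero =>
              have h00 : (m₀ : Fin n → ℤ) + (0 : ℕ) • e = (m₀ : Fin n → ℤ) := by simp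
              rw [h00]
              exact ⟨m₀.2, hm₀pos⟩
            | succ k ih =>
              have hmem := he₂ _ ih.1 (ne_of_gt ih.2)
              have harr : (m₀ : Fin n → ℤ) + (k + 1) • e = ((m₀ : Fin n → ℤ) + k • e) + e := by
                rw [succ_nsmul]; ring
              rw [harr]
              refine ⟨hmem, ?_⟩
              rw [pairQ_toQ_add]
              linarith [ih.2]
          intro p hp
          by_contra hq
          push_neg at hq
          obtain ⟨k, hk⟩ := exists_nat_gt (pairQ (toQ (m₀ : Fin n → ℤ)) p / (-(pairQ (toQ e) p)))
          have h1 : 0 ≤ pairQ (toQ ((m₀ : Fin n → ℤ) + k • e)) p := (claim k).1 p hp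
          rw [pairQ_toQ_add, pairQ_toQ_nsmul] at h1
          rw [div_lt_iff₀ (by linarith : (0:ℚ) < -(pairQ (toQ e) p))] at hk
          nlinarith
        have hpe1 : pairQ (toQ e) ν ≤ -1 := by
          obtain ⟨z, hz⟩ := int_pair ν hl e
          rw [hz] at hpe ⊢
          have hz0 : z < 0 := by exact_mod_cast hpe
          have hz1 : z ≤ -1 := by omega
          exact_mod_cast hz1
        intro m hm
        rw [pv_sh σ ν e he₂ m hm]
        linarith
    have main : ∀ N : ℕ, ∀ (m : latticeCone σ) (c : K), pv σ ν m ≤ N →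
        (⇑L)^[N + 1] (single m c) = 0 := by
      intro N
      induction N with
      | zero =>
        intro m c hle
        have h0 : pv σ ν m = 0 := le_antisymm (by simpa using hle) (pv_nonneg σ ν hν m)
        show L (single m c) = 0
        rw [Lmap_single, h0, map_zero, zero_smul]
      | succ N ih =>
        intro m c hle
        rw [Function.iterate_succ_apply]
        rcases eq_or_ne (pv σ ν m) 0 with h | h
        · have hz : L (single m c) = 0 := by rw [Lmap_single, h, map_zero, zero_smul]
          rw [show (⇑L) (single m c) = 0 from hz]
          exact hzero _
        · have hsm : pv σ ν (sh σ ν e he₂ m) ≤ (N : ℚ) := by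
            have h1 := hstep m h
            have h2 : pv σ ν m ≤ (N : ℚ) + 1 := by push_cast at hle ⊢; linarith
            linarith
          have hLx : (⇑L) (single m c) =
              single (sh σ ν e he₂ m) (algebraMap ℚ K (pv σ ν m) • c) := by
            rw [Lmap_single, AddMonoidAlgebra.smul_single]
          rw [hLx]
          exact ih _ _ hsm
    have habsorb : ∀ (k j : ℕ) (x : AddMonoidAlgebra K ↥(latticeCone σ)), k ≤ j →
        (⇑L)^[k] x = 0 → (⇑L)^[j] x = 0 := by
      intro k j x hkj h
      rw [← Nat.sub_add_cancel hkj, Function.iterate_add_apply, h]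
      exact hzero _
    have hadd_it : ∀ (k : ℕ) (x y : AddMonoidAlgebra K ↥(latticeCone σ)),
        (⇑L)^[k] (x + y) = (⇑L)^[k] x + (⇑L)^[k] y := by
      intro k
      induction k with
      | zero => intro x y; simp
      | succ k ih =>
        intro x y
        rw [Function.iterate_succ_apply, Function.iterate_succ_apply,
          Function.iterate_succ_apply, map_add, ih]
    intro a
    have hDco : ⇑(Der K σ ν e he₂ hν) = ⇑L := rfl
    rw [hDco]
    refine AddMonoidAlgebra.induction a ⟨0, rfl⟩ ?_
    rintro m c f hmf hc ⟨k, hk⟩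
    refine ⟨max (⌈pv σ ν m⌉₊ + 1) k, ?_⟩
    rw [hadd_it,
      habsorb _ _ _ (le_max_left _ _) (main ⌈pv σ ν m⌉₊ m c (Nat.le_ceil _)),
      habsorb _ _ _ (le_max_right _ _) hk, add_zero]
  · -- kernel
    intro x
    constructor
    · intro hx
      have hx' : L x = 0 := hx
      have hsupp : ∀ m ∈ x.coeff.support, pairQ (toQ (m : Fin n → ℤ)) ν = 0 := by
        intro m hm
        by_contra hpv
        have hxsum : L x = ∑ m' ∈ x.coeff.support,
            algebraMap ℚ K (pv σ ν m') • AddMonoidAlgebra.single (sh σ ν e he₂ m') (x.coeff m') := by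
          conv_lhs => rw [← AddMonoidAlgebra.sum_coeff_single x, Finsupp.sum]
          rw [map_sum]
          exact Finset.sum_congr rfl fun m' _ => Lmap_single K σ ν e he₂ m' (x.coeff m')
        have hval : (∑ m' ∈ x.coeff.support,
            algebraMap ℚ K (pv σ ν m') • AddMonoidAlgebra.single (sh σ ν e he₂ m') (x.coeff m')).coeff
              (sh σ ν e he₂ m) = 0 := by
          rw [← hxsum, hx']
          rfl
        rw [AddMonoidAlgebra.coeff_sum, Finsupp.finset_sum_apply] at hval
        rw [Finset.sum_eq_single m] at hval
        · rw [AddMonoidAlgebra.coeff_smul_apply, AddMonoidAlgebra.coeff_single, Finsupp.single_apply, if_pos rfl, smul_eq_mul] at hval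
          have hamne : algebraMap ℚ K (pv σ ν m) ≠ 0 := by
            intro hzero'
            exact hpv ((algebraMap ℚ K).injective (by rw [hzero', map_zero]))
          exact (Finsupp.mem_support_iff.mp hm) (by
            rcases mul_eq_zero.mp hval with h | h
            · exact absurd h hamne
            · exact h)
        · intro m' hm' hne
          rcases eq_or_ne (pv σ ν m') 0 with h' | h'
          · rw [AddMonoidAlgebra.coeff_smul_apply, h', map_zero, zero_smul]
          · rw [AddMonoidAlgebra.coeff_smul_apply, AddMonoidAlgebra.coeff_single, Finsupp.single_apply, if_neg, smul_zero]
            intro hshh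
            apply hne
            have hcoeq := congrArg Subtype.val hshh
            rw [sh_coe σ ν e he₂ _ h', sh_coe σ ν e he₂ _ hpv] at hcoeq
            exact Subtype.ext (add_right_cancel hcoeq)
        · intro hmm; exact absurd hm hmm
      have hrepr : x = ∑ m ∈ x.coeff.support, (x.coeff m) • single m (1 : K) := by
        conv_lhs => rw [← AddMonoidAlgebra.sum_coeff_single x, Finsupp.sum]
        refine Finset.sum_congr rfl fun m _ => ?_
        rw [AddMonoidAlgebra.smul_single, smul_eq_mul, mul_one]
      rw [hrepr]
      exact Submodule.sum_mem _ fun m hm => Submodule.smul_mem _ _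
        (Submodule.subset_span ⟨m, hsupp m hm, rfl⟩)
    · intro hx
      induction hx using Submodule.span_induction with
      | mem y hy =>
        obtain ⟨m, hm0, rfl⟩ := hy
        rw [hDL, Lmap_single]
        simp only [pv]
        rw [hm0, map_zero, zero_smul]
      | zero => exact map_zero _
      | add u v hu hv hu' hv' => rw [map_add, hu', hv', add_zero]
      | smul c u hu hu' =>
        rw [hDL] at hu' ⊢
        rw [map_smul, hu', smul_zero]
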